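/- Let ‖·‖ be the Euclidean norm on ℝ², K′ ⊂ ℝ² measurable, x ∈ ℝ², s > 0, ρ′ ∈ (0,1), and let 0 < t < t′ < 1. Suppose that for every r ∈ (ts, t′s) the 1-dimensional Hausdorff measure of K′ ∩ ∂B̄(x,r) is at most 2π(1−ρ′)r. Then the Lebesgue measure of K′ ∩ B̄(x,s) is at most πs²·(1 − ρ′(t′² − t²)). -/

import Mathlib

open MeasureTheory Metric Set Real

local notation "E₂" => EuclideanSpace ℝ (Fin 2)

open Filter
open scoped ENNReal NNReal
set_option maxHeartbeats 1000000


noncomputable def eE : ℝ × ℝ → E₂ := fun p =>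
  (MeasurableEquiv.toLp 2 (Fin 2 → ℝ)) ((MeasurableEquiv.finTwoArrow).symm p)

lemma eE_apply_zero (p : ℝ × ℝ) : eE p 0 = p.1 := by
  simp [eE, MeasurableEquiv.toLp, MeasurableEquiv.finTwoArrow]; rfl

lemma eE_apply_one (p : ℝ × ℝ) : eE p 1 = p.2 := by
  simp [eE, MeasurableEquiv.toLp, MeasurableEquiv.finTwoArrow]; rfl

lemma eE_mp : MeasurePreserving eE :=
  ((EuclideanSpace.volume_preserving_symm_measurableEquiv_toLp (Fin 2)).symm).comp
    ((volume_preserving_finTwoArrow ℝ).symm)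

lemma eE_norm (p : ℝ × ℝ) : ‖eE p‖ = Real.sqrt (p.1 ^ 2 + p.2 ^ 2) := by
  rw [EuclideanSpace.norm_eq]
  simp [Fin.sum_univ_two, eE_apply_zero, eE_apply_one, Real.norm_eq_abs, sq_abs]

noncomputable def ψ (x : E₂) : ℝ × ℝ → E₂ := fun p => x + eE p

lemma ψ_mp (x : E₂) : MeasurePreserving (ψ x) :=
  (measurePreserving_add_left volume x).comp eE_mp

lemma ψ_dist (x : E₂) (p : ℝ × ℝ) : dist (ψ x p) x = Real.sqrt (p.1 ^ 2 + p.2 ^ 2) := by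
  rw [dist_eq_norm, ψ]; simp [eE_norm]

lemma sum_meas_inter_le {X : Type*} [MeasurableSpace X] (μ : Measure X)
    (s : Finset ℕ) (E : ℕ → Set X) (hE : ∀ i ∈ s, MeasurableSet (E i))
    (hd : ∀ i ∈ s, ∀ j ∈ s, i ≠ j → Disjoint (E i) (E j)) (A : Set X) :
    ∑ i ∈ s, μ (A ∩ E i) ≤ μ A := by
  induction s using Finset.induction_on generalizing A with
  | empty => simp
  | insert _ _ ha ih =>
    rename_i a s'
    rw [Finset.sum_insert ha]
    have key : ∀ i ∈ s', A ∩ E i = (A \ E a) ∩ E i := by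
      intro i hi
      have hdisj := hd a (Finset.mem_insert_self a s') i (Finset.mem_insert_of_mem hi)
        (by rintro rfl; exact ha hi)
      ext y; constructor
      · rintro ⟨hy, hyi⟩
        exact ⟨⟨hy, fun hya => (Set.disjoint_left.mp hdisj hya) hyi⟩, hyi⟩
      · rintro ⟨⟨hy, _⟩, hyi⟩; exact ⟨hy, hyi⟩
    rw [Finset.sum_congr rfl fun i hi => congrArg μ (key i hi)]
    have h2 : ∑ i ∈ s', μ ((A \ E a) ∩ E i) ≤ μ (A \ E a) :=
      ih (fun i hi => hE i (Finset.mem_insert_of_mem hi))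
        (fun i hi j hj hij => hd i (Finset.mem_insert_of_mem hi) j (Finset.mem_insert_of_mem hj) hij)
        (A \ E a)
    calc μ (A ∩ E a) + ∑ i ∈ s', μ ((A \ E a) ∩ E i)
        ≤ μ (A ∩ E a) + μ (A \ E a) := add_le_add_right h2 _
      _ = μ A := measure_inter_add_diff A (hE a (Finset.mem_insert_self a s'))

lemma arcsin_lip {δ a b : ℝ} (hδ0 : 0 < δ) (hδ : δ < π / 2)
    (ha : |a| ≤ Real.sin δ) (hb : |b| ≤ Real.sin δ) :
    |Real.arcsin a - Real.arcsin b| ≤ (1 / Real.cos δ) * |a - b| := by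
  have hcos : 0 < Real.cos δ := Real.cos_pos_of_mem_Ioo ⟨by linarith, hδ⟩
  have hsin1 : Real.sin δ < 1 := by
    calc Real.sin δ < Real.sin (π/2) :=
          Real.sin_lt_sin_of_lt_of_le_pi_div_two (by linarith) le_rfl hδ
      _ = 1 := Real.sin_pi_div_two
  set m := Real.sin δ with hm
  have hconv : Convex ℝ (Set.Icc (-m) m) := convex_Icc _ _
  have hderiv : ∀ y ∈ Set.Icc (-m) m,
      HasDerivWithinAt Real.arcsin (1 / Real.sqrt (1 - y ^ 2)) (Set.Icc (-m) m) y := by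
    intro y hy
    have hy1 : y ≠ -1 := by
      intro hc; rw [hc] at hy; have := hy.1; simp at this; linarith
    have hy2 : y ≠ 1 := by
      intro hc; rw [hc] at hy; have := hy.2; linarith
    exact (Real.hasDerivAt_arcsin hy1 hy2).hasDerivWithinAt
  have hbound : ∀ y ∈ Set.Icc (-m) m, ‖1 / Real.sqrt (1 - y ^ 2)‖ ≤ 1 / Real.cos δ := by
    intro y hy
    have hym : |y| ≤ m := abs_le.mpr ⟨hy.1, hy.2⟩
    have h1 : Real.cos δ ≤ Real.sqrt (1 - y ^ 2) := by
      have hc : Real.cos δ = Real.sqrt (1 - m ^ 2) :=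
        Real.cos_eq_sqrt_one_sub_sin_sq (by linarith) (by linarith)
      rw [hc]
      apply Real.sqrt_le_sqrt
      have : y ^ 2 ≤ m ^ 2 := sq_le_sq' (by linarith [abs_le.mp hym]) (abs_le.mp hym).2
      linarith
    rw [Real.norm_eq_abs, abs_of_nonneg (by positivity)]
    exact one_div_le_one_div_of_le hcos h1
  have := hconv.norm_image_sub_le_of_norm_hasDerivWithin_le hderiv hbound
    (Set.mem_Icc.mpr ⟨neg_le_of_abs_le hb, le_of_abs_le hb⟩)
    (Set.mem_Icc.mpr ⟨neg_le_of_abs_le ha, le_of_abs_le ha⟩)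
  simpa [Real.norm_eq_abs] using this

lemma angle_bound (K' : Set E₂) (x : E₂) (r : ℝ) (hr : 0 < r) (n : ℕ) (hn : 3 ≤ n) :
    volume {θ : ℝ | θ ∈ Set.Ioo (-π) π ∧ ψ x (r * Real.cos θ, r * Real.sin θ) ∈ K'}
      ≤ ENNReal.ofReal (1 / (r * Real.cos (π / n))) * μH[1] (K' ∩ sphere x r) := by
  have hπ := Real.pi_pos
  set δ := π / n with hδdef
  have hn0 : (0:ℝ) < n := by positivity
  have hδ0 : 0 < δ := by positivity
  have hδ : δ < π / 2 := by
    rw [hδdef, div_lt_div_iff₀ hn0 two_pos]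
    have : (3:ℝ) ≤ n := by exact_mod_cast hn
    nlinarith
  have hcos : 0 < Real.cos δ := Real.cos_pos_of_mem_Ioo ⟨by linarith, hδ⟩
  set c : ℝ → E₂ := fun θ => ψ x (r * Real.cos θ, r * Real.sin θ) with hc
  set Θ : Set ℝ := {θ : ℝ | θ ∈ Set.Ioo (-π) π ∧ c θ ∈ K'} with hΘ
  have hsphere : ∀ θ : ℝ, c θ ∈ sphere x r := by
    intro θ
    rw [mem_sphere, hc, ψ_dist]
    have : (r * Real.cos θ) ^ 2 + (r * Real.sin θ) ^ 2 = r ^ 2 := by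
      have := Real.sin_sq_add_cos_sq θ; nlinarith
    rw [this, Real.sqrt_sq hr.le]
  have hcsub : ∀ θ : ℝ, (c θ - x) 0 = r * Real.cos θ ∧ (c θ - x) 1 = r * Real.sin θ := by
    intro θ
    have h0 : c θ - x = eE (r * Real.cos θ, r * Real.sin θ) := by
      rw [hc]; show x + eE _ - x = _; abel
    constructor
    · rw [h0, eE_apply_zero]
    · rw [h0, eE_apply_one]
  -- angle function
  set α : E₂ → ℝ := fun y => Complex.arg (((y - x) 0 : ℝ) + ((y - x) 1 : ℝ) * Complex.I) with hα
  have hαmeas : Measurable α := by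
    apply Complex.measurable_arg.comp
    apply Measurable.add
    · exact Complex.measurable_ofReal.comp (by fun_prop : Measurable fun y : E₂ => (y - x) 0)
    · exact (Complex.measurable_ofReal.comp
        (by fun_prop : Measurable fun y : E₂ => (y - x) 1)).mul_const Complex.I
  have hαc : ∀ θ ∈ Set.Ioo (-π) π, α (c θ) = θ := by
    intro θ hθ
    rw [hα]
    simp only [(hcsub θ).1, (hcsub θ).2]
    have : ((r * Real.cos θ : ℝ) : ℂ) + ((r * Real.sin θ : ℝ) : ℂ) * Complex.I
        = (r : ℂ) * (Complex.cos θ + Complex.sin θ * Complex.I) := by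
      push_cast [Complex.ofReal_cos, Complex.ofReal_sin]; ring
    rw [this, Complex.arg_real_mul _ hr, Complex.arg_cos_add_sin_mul_I ⟨hθ.1, hθ.2.le⟩]
  -- intervals
  set I : ℕ → Set ℝ := fun j => Set.Ioc (-π + 2*δ*j) (-π + 2*δ*(j+1)) with hI
  have hcover : Θ ⊆ ⋃ j ∈ Finset.range n, I j := by
    intro θ hθ
    obtain ⟨⟨hθ1, hθ2⟩, _⟩ := hθ
    set z := ⌈(θ + π) / (2*δ)⌉ with hz
    have h2δ : 0 < 2*δ := by linarith
    have hpos : 0 < (θ + π) / (2*δ) := div_pos (by linarith) h2δ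
    have hz1 : 1 ≤ z := by
      have : (0:ℤ) < z := Int.ceil_pos.mpr hpos
      omega
    have hzn : z ≤ n := by
      apply Int.ceil_le.mpr
      rw [div_le_iff₀ h2δ]
      have h2δn : 2*δ*n = 2*π := by
        rw [hδdef]; field_simp
      push_cast
      nlinarith
    have hceil1 : (z:ℝ) - 1 < (θ + π) / (2*δ) := by
      have := Int.ceil_lt_add_one ((θ + π) / (2*δ))
      rw [← hz] at this; linarith
    have hceil2 : (θ + π) / (2*δ) ≤ (z:ℝ) := Int.le_ceil _
    set j := (z - 1).toNat with hj
    have hjz : (j:ℝ) = (z:ℝ) - 1 := by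
      have h' : ((j:ℤ) : ℝ) = ((z - 1 : ℤ) : ℝ) := by
        rw [hj, Int.toNat_of_nonneg (by omega)]
      push_cast at h'
      linarith
    refine Set.mem_iUnion₂.mpr ⟨j, Finset.mem_range.mpr (by omega), ?_⟩
    · rw [hI]
      constructor
      · have : (2*δ) * ((z:ℝ) - 1) < θ + π := by
          calc (2*δ) * ((z:ℝ) - 1) < (2*δ) * ((θ + π)/(2*δ)) := by
                exact mul_lt_mul_of_pos_left hceil1 h2δ
            _ = θ + π := by field_simp
        rw [hjz]; nlinarith
      · have : θ + π ≤ (2*δ) * (z:ℝ) := by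
          calc θ + π = (2*δ) * ((θ + π)/(2*δ)) := by field_simp
            _ ≤ (2*δ) * (z:ℝ) := mul_le_mul_of_nonneg_left hceil2 h2δ.le
        rw [hjz]; nlinarith
  -- Lipschitz constant
  set K : ℝ≥0 := Real.toNNReal (1 / (r * Real.cos δ)) with hK
  have hKcoe : (K:ℝ) = 1 / (r * Real.cos δ) := Real.coe_toNNReal _ (by positivity)
  -- per-interval bound
  have hper : ∀ j : ℕ, volume (Θ ∩ I j)
      ≤ (K:ℝ≥0∞) * μH[1] ((K' ∩ sphere x r) ∩ α ⁻¹' (I j)) := by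
    intro j
    set u := -π + 2*δ*j + δ with hu
    set g : E₂ → ℝ := fun y =>
      u + Real.arcsin ((((y - x) 0) * (-Real.sin u) + ((y - x) 1) * (Real.cos u)) / r) with hg
    have hinner : ∀ θ : ℝ,
        (((c θ - x) 0) * (-Real.sin u) + ((c θ - x) 1) * (Real.cos u)) / r
          = Real.sin (θ - u) := by
      intro θ
      rw [(hcsub θ).1, (hcsub θ).2, Real.sin_sub]
      field_simp
      ring
    have hθu : ∀ θ ∈ I j, |θ - u| ≤ δ := by
      intro θ hθ
      rw [hI] at hθ
      obtain ⟨h1, h2⟩ := hθ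
      rw [abs_le]
      constructor <;> [nlinarith; nlinarith]
    have hgc : ∀ θ ∈ I j, g (c θ) = θ := by
      intro θ hθ
      have habs := hθu θ hθ
      rw [abs_le] at habs
      rw [hg]
      show u + Real.arcsin _ = θ
      rw [hinner θ, Real.arcsin_sin (by linarith) (by linarith)]
      ring
    have hlip : LipschitzOnWith K g (c '' (Θ ∩ I j)) := by
      rw [lipschitzOnWith_iff_dist_le_mul]
      rintro y ⟨θ₁, hθ₁, rfl⟩ y' ⟨θ₂, hθ₂, rfl⟩
      rw [hgc θ₁ hθ₁.2, hgc θ₂ hθ₂.2]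
      -- Cauchy-Schwarz step
      set v : E₂ := c θ₁ - c θ₂ with hv
      set w : E₂ := eE (-Real.sin u, Real.cos u) with hw
      have hwnorm : ‖w‖ = 1 := by
        rw [hw, eE_norm]
        rw [show (-Real.sin u) ^ 2 + (Real.cos u) ^ 2 = 1 by
          have := Real.sin_sq_add_cos_sq u; nlinarith]
        exact Real.sqrt_one
      have hvw : (inner ℝ v w : ℝ) = v 0 * (-Real.sin u) + v 1 * (Real.cos u) := by
        rw [PiLp.inner_apply]
        simp only [RCLike.inner_apply, conj_trivial, Fin.sum_univ_two]
        rw [hw, eE_apply_zero, eE_apply_one]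
        dsimp only
        ring
      have hCS : |v 0 * (-Real.sin u) + v 1 * (Real.cos u)| ≤ ‖v‖ := by
        rw [← hvw]
        calc |(inner ℝ v w : ℝ)| ≤ ‖v‖ * ‖w‖ := abs_real_inner_le_norm v w
          _ = ‖v‖ := by rw [hwnorm, mul_one]
      have habs_sin : ∀ a : ℝ, |a| ≤ δ → |Real.sin a| ≤ Real.sin δ := by
        intro a ha
        rw [abs_le] at ha ⊢
        constructor
        · have h2 := Real.sin_le_sin_of_le_of_le_pi_div_two (x := -δ) (y := a)
            (by linarith) (by linarith) (by linarith)
          rw [Real.sin_neg] at h2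
          linarith
        · exact Real.sin_le_sin_of_le_of_le_pi_div_two (by linarith) (by linarith) ha.2
      have hb1 := hθu θ₁ hθ₁.2
      have hb2 := hθu θ₂ hθ₂.2
      have hs1 := habs_sin (θ₁ - u) hb1
      have hs2 := habs_sin (θ₂ - u) hb2
      have harc := arcsin_lip hδ0 hδ hs1 hs2
      rw [abs_le] at hb1 hb2
      rw [Real.arcsin_sin (by linarith) (by linarith),
        Real.arcsin_sin (by linarith) (by linarith)] at harc
      have hdiff : Real.sin (θ₁ - u) - Real.sin (θ₂ - u)
          = (v 0 * (-Real.sin u) + v 1 * (Real.cos u)) / r := by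
        rw [← hinner θ₁, ← hinner θ₂]
        have hv0 : v 0 = (c θ₁ - x) 0 - (c θ₂ - x) 0 := by
          rw [hv]; simp [PiLp.sub_apply]
        have hv1 : v 1 = (c θ₁ - x) 1 - (c θ₂ - x) 1 := by
          rw [hv]; simp [PiLp.sub_apply]
        rw [hv0, hv1]
        field_simp
        ring
      have hfin : |Real.sin (θ₁ - u) - Real.sin (θ₂ - u)| ≤ ‖v‖ / r := by
        rw [hdiff, abs_div, abs_of_pos hr]
        gcongr
      rw [Real.dist_eq, dist_eq_norm]
      have : |θ₁ - θ₂| = |(θ₁ - u) - (θ₂ - u)| := by congr 1; ring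
      rw [this, hKcoe]
      calc |(θ₁ - u) - (θ₂ - u)| ≤ (1 / Real.cos δ) * |Real.sin (θ₁ - u) - Real.sin (θ₂ - u)| := harc
        _ ≤ (1 / Real.cos δ) * (‖v‖ / r) := by
            apply mul_le_mul_of_nonneg_left hfin (by positivity)
        _ = 1 / (r * Real.cos δ) * ‖c θ₁ - c θ₂‖ := by rw [hv]; ring
    have him : Θ ∩ I j ⊆ g '' (c '' (Θ ∩ I j)) := by
      rintro θ ⟨hθΘ, hθI⟩
      exact ⟨c θ, Set.mem_image_of_mem c ⟨hθΘ, hθI⟩, hgc θ hθI⟩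
    have himg2 : c '' (Θ ∩ I j) ⊆ (K' ∩ sphere x r) ∩ α ⁻¹' (I j) := by
      rintro y ⟨θ, ⟨hθΘ, hθI⟩, rfl⟩
      exact ⟨⟨hθΘ.2, hsphere θ⟩, by rw [Set.mem_preimage, hαc θ hθΘ.1]; exact hθI⟩
    calc volume (Θ ∩ I j) = μH[1] (Θ ∩ I j) := by
          rw [← MeasureTheory.hausdorffMeasure_real]
      _ ≤ μH[1] (g '' (c '' (Θ ∩ I j))) := measure_mono him
      _ ≤ (K:ℝ≥0∞) ^ (1:ℝ) * μH[1] (c '' (Θ ∩ I j)) := hlip.hausdorffMeasure_image_le zero_le_one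
      _ = (K:ℝ≥0∞) * μH[1] (c '' (Θ ∩ I j)) := by rw [ENNReal.rpow_one]
      _ ≤ (K:ℝ≥0∞) * μH[1] ((K' ∩ sphere x r) ∩ α ⁻¹' (I j)) :=
          mul_le_mul_right (measure_mono himg2) _
  have hEmeas : ∀ j ∈ Finset.range n, MeasurableSet (α ⁻¹' I j) := fun j _ =>
    hαmeas measurableSet_Ioc
  have hdisj : ∀ i ∈ Finset.range n, ∀ j ∈ Finset.range n, i ≠ j →
      Disjoint (α ⁻¹' I i) (α ⁻¹' I j) := by
    intro i _ j _ hij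
    apply Disjoint.preimage
    rw [hI]
    rw [Set.Ioc_disjoint_Ioc]
    rcases Nat.lt_or_ge i j with hlt | hge
    · have h1 : (i:ℝ) + 1 ≤ j := by exact_mod_cast hlt
      calc min (-π + 2*δ*(i+1)) (-π + 2*δ*(j+1)) ≤ -π + 2*δ*(i+1) := min_le_left _ _
        _ ≤ -π + 2*δ*j := by nlinarith
        _ ≤ max (-π + 2*δ*i) (-π + 2*δ*j) := le_max_right _ _
    · have hlt : j < i := by omega
      have h1 : (j:ℝ) + 1 ≤ i := by exact_mod_cast hlt
      calc min (-π + 2*δ*(i+1)) (-π + 2*δ*(j+1)) ≤ -π + 2*δ*(j+1) := min_le_right _ _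
        _ ≤ -π + 2*δ*i := by nlinarith
        _ ≤ max (-π + 2*δ*i) (-π + 2*δ*j) := le_max_left _ _
  show volume Θ ≤ _
  calc volume Θ ≤ ∑ j ∈ Finset.range n, volume (Θ ∩ I j) := by
        refine (measure_mono ?_).trans (measure_biUnion_finset_le _ _)
        intro θ hθ
        obtain ⟨j, hj, hmem⟩ := Set.mem_iUnion₂.mp (hcover hθ)
        exact Set.mem_iUnion₂.mpr ⟨j, hj, ⟨hθ, hmem⟩⟩
    _ ≤ ∑ j ∈ Finset.range n, (K:ℝ≥0∞) * μH[1] ((K' ∩ sphere x r) ∩ α ⁻¹' (I j)) :=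
        Finset.sum_le_sum fun j _ => hper j
    _ = (K:ℝ≥0∞) * ∑ j ∈ Finset.range n, μH[1] ((K' ∩ sphere x r) ∩ α ⁻¹' (I j)) := by
        rw [Finset.mul_sum]
    _ ≤ (K:ℝ≥0∞) * μH[1] (K' ∩ sphere x r) :=
        mul_le_mul_right (sum_meas_inter_le _ _ _ hEmeas hdisj _) _
    _ = ENNReal.ofReal (1 / (r * Real.cos (π / n))) * μH[1] (K' ∩ sphere x r) := by
        rw [hK, hδdef]
        rfl


theorem lintegral_comp_polarCoord_symm' (g : ℝ × ℝ → ℝ≥0∞) :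
    ∫⁻ p in polarCoord.target, ENNReal.ofReal p.1 * g (polarCoord.symm p) = ∫⁻ p, g p := by
  set B : ℝ × ℝ → ℝ × ℝ →L[ℝ] ℝ × ℝ := fun p =>
    LinearMap.toContinuousLinearMap (Matrix.toLin (Module.Basis.finTwoProd ℝ) (Module.Basis.finTwoProd ℝ)
      !![Real.cos p.2, -p.1 * Real.sin p.2; Real.sin p.2, p.1 * Real.cos p.2])
  have A : ∀ p ∈ polarCoord.target, HasFDerivWithinAt polarCoord.symm (B p) polarCoord.target p :=
    fun p _ => (hasFDerivAt_polarCoord_symm p).hasFDerivWithinAt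
  have B_det : ∀ p, (B p).det = p.1 := by
    intro p
    conv_rhs => rw [← one_mul p.1, ← Real.cos_sq_add_sin_sq p.2]
    simp only [B, neg_mul, LinearMap.det_toContinuousLinearMap, LinearMap.det_toLin,
      Matrix.det_fin_two_of, sub_neg_eq_add]
    ring
  symm
  calc
    ∫⁻ p, g p = ∫⁻ p in polarCoord.source, g p := by
      rw [← setLIntegral_univ]
      exact setLIntegral_congr polarCoord_source_ae_eq_univ.symm
    _ = ∫⁻ p in polarCoord.symm '' polarCoord.target, g p := by
      rw [polarCoord.symm_image_target_eq_source]
    _ = ∫⁻ p in polarCoord.target, ENNReal.ofReal |(B p).det| * g (polarCoord.symm p) := by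
      apply lintegral_image_eq_lintegral_abs_det_fderiv_mul volume
        polarCoord.open_target.measurableSet A polarCoord.symm.injOn g
    _ = ∫⁻ p in polarCoord.target, ENNReal.ofReal p.1 * g (polarCoord.symm p) := by
      apply setLIntegral_congr_fun polarCoord.open_target.measurableSet
      intro p hp
      dsimp only
      rw [B_det, abs_of_pos hp.1]

lemma mid_bound (K' : Set E₂) (hK' : MeasurableSet K') (x : E₂) (s ρ' t t' : ℝ)
    (hs : 0 < s) (hρ : ρ' ∈ Set.Ioo (0 : ℝ) 1)
    (ht : 0 < t) (htt' : t < t')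
    (h : ∀ r ∈ Set.Ioo (t * s) (t' * s),
      μH[1] (K' ∩ Metric.sphere x r) ≤ ENNReal.ofReal (2 * π * (1 - ρ') * r))
    (n : ℕ) (hn : 3 ≤ n) :
    volume (K' ∩ (ball x (t'*s) \ closedBall x (t*s)))
      ≤ ENNReal.ofReal (π * (1-ρ') * ((t'*s)^2 - (t*s)^2) / Real.cos (π/n)) := by
  have hπ := Real.pi_pos
  obtain ⟨hρ0, hρ1⟩ := hρ
  have hn0 : (0:ℝ) < n := by positivity
  have hδ : π / n < π / 2 := by
    rw [div_lt_div_iff₀ hn0 two_pos]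
    have : (3:ℝ) ≤ n := by exact_mod_cast hn
    nlinarith
  have hcos : 0 < Real.cos (π / n) := Real.cos_pos_of_mem_Ioo
    ⟨by have : (0:ℝ) < π / n := by positivity
        linarith, hδ⟩
  set S : Set E₂ := K' ∩ (ball x (t'*s) \ closedBall x (t*s)) with hS
  have hSmeas : MeasurableSet S := hK'.inter (measurableSet_ball.diff measurableSet_closedBall)
  set T : Set (ℝ × ℝ) := ψ x ⁻¹' S with hT
  have hTmeas : MeasurableSet T := (ψ_mp x).measurable hSmeas
  have hvolST : volume S = volume T := ((ψ_mp x).measure_preimage hSmeas.nullMeasurableSet).symm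
  -- polar coordinates
  have hpolar : volume T = ∫⁻ p in polarCoord.target,
      ENNReal.ofReal p.1 * T.indicator 1 (polarCoord.symm p) := by
    rw [lintegral_comp_polarCoord_symm' (T.indicator 1)]
    rw [lintegral_indicator hTmeas]
    simp
  set C : ℝ := 2 * π * (1 - ρ') / Real.cos (π / n) with hC
  have hCpos : 0 < C := by
    rw [hC]
    exact div_pos (by nlinarith) hcos
  -- inner integral bound
  have hinner : ∀ r ∈ Set.Ioi (0:ℝ),
      (∫⁻ θ in Set.Ioo (-π) π, ENNReal.ofReal r * T.indicator 1 (r * Real.cos θ, r * Real.sin θ))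
        ≤ (Set.Ioo (t*s) (t'*s)).indicator (fun r => ENNReal.ofReal r * ENNReal.ofReal C) r := by
    intro r hr
    rw [Set.mem_Ioi] at hr
    have hmeas_h : Measurable (fun θ : ℝ => ((r * Real.cos θ, r * Real.sin θ) : ℝ × ℝ)) := by
      fun_prop
    have hpre : MeasurableSet ((fun θ : ℝ => ((r * Real.cos θ, r * Real.sin θ) : ℝ × ℝ)) ⁻¹' T) :=
      hmeas_h hTmeas
    have step1 : (∫⁻ θ in Set.Ioo (-π) π,
        ENNReal.ofReal r * T.indicator 1 (r * Real.cos θ, r * Real.sin θ))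
        = ENNReal.ofReal r *
          volume (((fun θ : ℝ => ((r * Real.cos θ, r * Real.sin θ) : ℝ × ℝ)) ⁻¹' T) ∩ Set.Ioo (-π) π) := by
      rw [lintegral_const_mul _ (by exact (measurable_one.indicator hTmeas).comp hmeas_h)]
      congr 1
      have : (fun θ : ℝ => T.indicator (1 : ℝ × ℝ → ℝ≥0∞) ((r * Real.cos θ, r * Real.sin θ) : ℝ × ℝ))
          = fun θ : ℝ => ((fun θ : ℝ => ((r * Real.cos θ, r * Real.sin θ) : ℝ × ℝ)) ⁻¹' T).indicator
              (1 : ℝ → ℝ≥0∞) θ := by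
        funext θ
        by_cases hmem : ((r * Real.cos θ, r * Real.sin θ) : ℝ × ℝ) ∈ T <;>
          simp [Set.indicator_apply, hmem]
      rw [this, lintegral_indicator hpre]
      simp [Measure.restrict_apply hpre]
    rw [step1]
    -- the angular set
    have hdistr : ∀ θ : ℝ, dist (ψ x (r * Real.cos θ, r * Real.sin θ)) x = r := by
      intro θ
      rw [ψ_dist]
      have : (r * Real.cos θ) ^ 2 + (r * Real.sin θ) ^ 2 = r ^ 2 := by
        have := Real.sin_sq_add_cos_sq θ; nlinarith
      rw [this, Real.sqrt_sq hr.le]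
    by_cases hrin : r ∈ Set.Ioo (t*s) (t'*s)
    · rw [Set.indicator_of_mem hrin]
      apply mul_le_mul_right
      have hsub : ((fun θ : ℝ => ((r * Real.cos θ, r * Real.sin θ) : ℝ × ℝ)) ⁻¹' T) ∩ Set.Ioo (-π) π
          ⊆ {θ : ℝ | θ ∈ Set.Ioo (-π) π ∧ ψ x (r * Real.cos θ, r * Real.sin θ) ∈ K'} := by
        rintro θ ⟨hθT, hθI⟩
        exact ⟨hθI, (hθT : ψ x _ ∈ S).1⟩
      calc volume _ ≤ volume {θ : ℝ | θ ∈ Set.Ioo (-π) π ∧ ψ x (r * Real.cos θ, r * Real.sin θ) ∈ K'} :=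
            measure_mono hsub
        _ ≤ ENNReal.ofReal (1 / (r * Real.cos (π / n))) * μH[1] (K' ∩ sphere x r) :=
            angle_bound K' x r hr n hn
        _ ≤ ENNReal.ofReal (1 / (r * Real.cos (π / n))) * ENNReal.ofReal (2 * π * (1 - ρ') * r) :=
            mul_le_mul_right (h r hrin) _
        _ = ENNReal.ofReal C := by
            rw [← ENNReal.ofReal_mul (by positivity)]
            congr 1
            rw [hC]
            field_simp
    · rw [Set.indicator_of_notMem hrin]
      have hempty : ((fun θ : ℝ => ((r * Real.cos θ, r * Real.sin θ) : ℝ × ℝ)) ⁻¹' T)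
          ∩ Set.Ioo (-π) π = ∅ := by
        ext θ
        simp only [Set.mem_inter_iff, Set.mem_empty_iff_false, iff_false, not_and]
        intro hθT _
        apply hrin
        have hmem : ψ x (r * Real.cos θ, r * Real.sin θ) ∈ S := hθT
        have h1 : dist (ψ x (r * Real.cos θ, r * Real.sin θ)) x < t'*s :=
          Metric.mem_ball.mp hmem.2.1
        have h2 : ¬ dist (ψ x (r * Real.cos θ, r * Real.sin θ)) x ≤ t*s :=
          fun hc => hmem.2.2 (Metric.mem_closedBall.mpr hc)
        rw [hdistr θ] at h1 h2
        exact ⟨lt_of_not_ge h2, h1⟩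
      rw [hempty, measure_empty, mul_zero]
  -- assemble via Fubini
  set F : ℝ × ℝ → ℝ≥0∞ :=
    fun p => ENNReal.ofReal p.1 * T.indicator (1 : ℝ × ℝ → ℝ≥0∞) (p.1 * Real.cos p.2, p.1 * Real.sin p.2)
    with hF
  have hpolar2 : volume T = ∫⁻ p in polarCoord.target, F p := by
    rw [hpolar]
    congr 1
  have hFmeas : Measurable F := by
    apply Measurable.mul (ENNReal.measurable_ofReal.comp measurable_fst)
    exact (measurable_one.indicator hTmeas).comp (by fun_prop)
  have hts0 : 0 < t * s := by positivity
  have htts : t * s < t' * s := by nlinarith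
  calc volume S = ∫⁻ p in polarCoord.target, F p := hvolST.trans hpolar2
    _ = ∫⁻ a in Set.Ioi (0:ℝ), ∫⁻ b in Set.Ioo (-π) π, F (a, b) := by
        rw [polarCoord_target, Measure.volume_eq_prod, ← Measure.prod_restrict,
          lintegral_prod _ hFmeas.aemeasurable]
    _ ≤ ∫⁻ a in Set.Ioi (0:ℝ),
          (Set.Ioo (t*s) (t'*s)).indicator (fun r => ENNReal.ofReal r * ENNReal.ofReal C) a := by
        apply setLIntegral_mono' measurableSet_Ioi
        intro a ha
        exact hinner a ha
    _ = ∫⁻ a in Set.Ioo (t*s) (t'*s), ENNReal.ofReal a * ENNReal.ofReal C := by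
        rw [lintegral_indicator measurableSet_Ioo, Measure.restrict_restrict measurableSet_Ioo]
        congr 2
        rw [Set.inter_eq_self_of_subset_left]
        intro a ha
        exact Set.mem_Ioi.mpr (lt_trans hts0 ha.1)
    _ = (∫⁻ a in Set.Ioo (t*s) (t'*s), ENNReal.ofReal a) * ENNReal.ofReal C := by
        rw [lintegral_mul_const _ ENNReal.measurable_ofReal]
    _ = ENNReal.ofReal (((t'*s)^2 - (t*s)^2)/2) * ENNReal.ofReal C := by
        congr 1
        have hint : Integrable (fun a : ℝ => a) (volume.restrict (Set.Ioo (t*s) (t'*s))) := by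
          have h1 : IntegrableOn (fun a : ℝ => a) (Set.Icc (t*s) (t'*s)) volume :=
            continuous_id.integrableOn_Icc
          exact h1.mono_set Set.Ioo_subset_Icc_self
        have hae : 0 ≤ᵐ[volume.restrict (Set.Ioo (t*s) (t'*s))] (fun a : ℝ => a) := by
          filter_upwards [ae_restrict_mem measurableSet_Ioo] with a ha
          exact le_of_lt (lt_trans hts0 ha.1)
        rw [← MeasureTheory.ofReal_integral_eq_lintegral_ofReal hint hae]
        congr 1
        rw [← MeasureTheory.integral_Ioc_eq_integral_Ioo,
          ← intervalIntegral.integral_of_le htts.le, integral_id]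
    _ = ENNReal.ofReal (π * (1-ρ') * ((t'*s)^2 - (t*s)^2) / Real.cos (π/n)) := by
        rw [← ENNReal.ofReal_mul (by nlinarith)]
        congr 1
        rw [hC]
        field_simp

/-- An annular coarea-type estimate in the Euclidean plane: if for every
radius `r ∈ (ts, t's)` the circle `∂B̄(x,r)` meets `K'` in `H¹`-measure at most
`2π(1-ρ')r`, then `|K' ∩ B̄(x,s)| ≤ πs²(1 - ρ'(t'² - t²))`. -/
theorem stmt_3 (K' : Set E₂) (hK' : MeasurableSet K') (x : E₂) (s ρ' t t' : ℝ)
    (hs : 0 < s) (hρ : ρ' ∈ Set.Ioo (0 : ℝ) 1)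
    (ht : 0 < t) (htt' : t < t') (ht'1 : t' < 1)
    (h : ∀ r ∈ Set.Ioo (t * s) (t' * s),
      μH[1] (K' ∩ Metric.sphere x r) ≤ ENNReal.ofReal (2 * π * (1 - ρ') * r)) :
    volume (K' ∩ Metric.closedBall x s)
      ≤ ENNReal.ofReal (π * s ^ 2 * (1 - ρ' * (t' ^ 2 - t ^ 2))) := by
  have hπ := Real.pi_pos
  obtain ⟨hρ0, hρ1⟩ := hρ
  have hts0 : 0 < t * s := by positivity
  have htts : t * s < t' * s := by nlinarith
  have ht's : t' * s < s := by nlinarith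
  have hp1 : (t*s)^2 ≤ (t'*s)^2 := pow_le_pow_left₀ hts0.le htts.le 2
  have hp2 : (t'*s)^2 ≤ s^2 := pow_le_pow_left₀ (by nlinarith) ht's.le 2
  have hmn : 0 ≤ π * (1 - ρ') * ((t'*s)^2 - (t*s)^2) :=
    mul_nonneg (mul_nonneg hπ.le (by linarith)) (by linarith)
  have hmn2 : 0 ≤ π * (t*s)^2 := mul_nonneg hπ.le (sq_nonneg _)
  -- ball volumes
  have hvol_ball : ∀ R : ℝ, 0 ≤ R →
      volume (ball x R : Set E₂) = ENNReal.ofReal (π * R^2) := by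
    intro R hR
    rw [EuclideanSpace.volume_ball]
    have hcard : (Fintype.card (Fin 2) : ℕ) = 2 := by simp
    rw [hcard]
    have h1 : Real.sqrt π ^ 2 = π := Real.sq_sqrt hπ.le
    have h2 : Real.Gamma ((2:ℕ)/2 + 1) = 1 := by
      norm_num
    rw [h1, h2]
    rw [← ENNReal.ofReal_pow hR, ← ENNReal.ofReal_mul (by positivity)]
    congr 1
    ring
  have hvol_cball : ∀ R : ℝ, 0 ≤ R →
      volume (closedBall x R : Set E₂) = ENNReal.ofReal (π * R^2) := by
    intro R hR
    rw [MeasureTheory.Measure.addHaar_closedBall_eq_addHaar_ball]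
    exact hvol_ball R hR
  -- middle annulus bound via limit over n
  have hmid : volume (K' ∩ (ball x (t'*s) \ closedBall x (t*s)))
      ≤ ENNReal.ofReal (π * (1-ρ') * ((t'*s)^2 - (t*s)^2)) := by
    set M := π * (1-ρ') * ((t'*s)^2 - (t*s)^2) with hM
    have htend : Tendsto (fun n : ℕ => ENNReal.ofReal (M / Real.cos (π/n))) atTop
        (nhds (ENNReal.ofReal M)) := by
      have h1 : Tendsto (fun n : ℕ => π / (n:ℝ)) atTop (nhds 0) :=
        Tendsto.div_atTop tendsto_const_nhds tendsto_natCast_atTop_atTop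
      have h2 : Tendsto (fun n : ℕ => Real.cos (π/n)) atTop (nhds 1) := by
        have := (Real.continuous_cos.tendsto 0).comp h1
        simpa [Function.comp_def] using this
      have h3 : Tendsto (fun n : ℕ => M / Real.cos (π/n)) atTop (nhds M) := by
        have := Tendsto.div (tendsto_const_nhds (x := M)) h2 one_ne_zero
        simpa [Pi.div_def] using this
      exact (ENNReal.continuous_ofReal.tendsto M).comp h3
    apply ge_of_tendsto htend
    filter_upwards [eventually_ge_atTop 3] with n hn
    exact mid_bound K' hK' x s ρ' t t' hs ⟨hρ0, hρ1⟩ ht htt' h n hn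
  -- decomposition
  have hsub : K' ∩ closedBall x s ⊆
      (closedBall x (t*s) ∪ (K' ∩ (ball x (t'*s) \ closedBall x (t*s))))
        ∪ (closedBall x s \ ball x (t'*s)) := by
    rintro y ⟨hyK, hyB⟩
    by_cases h1 : y ∈ closedBall x (t*s)
    · exact Or.inl (Or.inl h1)
    by_cases h2 : y ∈ ball x (t'*s)
    · exact Or.inl (Or.inr ⟨hyK, h2, h1⟩)
    · exact Or.inr ⟨hyB, h2⟩
  have hvol3 : volume (closedBall x s \ ball x (t'*s) : Set E₂)
      = ENNReal.ofReal (π * s^2 - π * (t'*s)^2) := by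
    rw [measure_diff ((ball_subset_ball ht's.le).trans ball_subset_closedBall)
      measurableSet_ball.nullMeasurableSet measure_ball_lt_top.ne,
      hvol_cball s hs.le, hvol_ball (t'*s) (by nlinarith),
      ← ENNReal.ofReal_sub _ (by nlinarith)]
  calc volume (K' ∩ closedBall x s)
      ≤ volume ((closedBall x (t*s) ∪ (K' ∩ (ball x (t'*s) \ closedBall x (t*s))))
        ∪ (closedBall x s \ ball x (t'*s))) := measure_mono hsub
    _ ≤ volume (closedBall x (t*s) ∪ (K' ∩ (ball x (t'*s) \ closedBall x (t*s))))
        + volume (closedBall x s \ ball x (t'*s)) := measure_union_le _ _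
    _ ≤ (volume (closedBall x (t*s) : Set E₂)
          + volume (K' ∩ (ball x (t'*s) \ closedBall x (t*s))))
        + volume (closedBall x s \ ball x (t'*s)) :=
        add_le_add_left (measure_union_le _ _) _
    _ ≤ (ENNReal.ofReal (π * (t*s)^2) + ENNReal.ofReal (π * (1-ρ') * ((t'*s)^2 - (t*s)^2)))
        + ENNReal.ofReal (π * s^2 - π * (t'*s)^2) := by
        rw [hvol_cball (t*s) hts0.le, hvol3]
        exact add_le_add_left (add_le_add_right hmid _) _
    _ = ENNReal.ofReal (π * s ^ 2 * (1 - ρ' * (t' ^ 2 - t ^ 2))) := by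
        rw [← ENNReal.ofReal_add (by linarith) (by linarith),
          ← ENNReal.ofReal_add (by linarith) (by nlinarith)]

        congr 1
        ring
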